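/- Let M be an n-dimensional Riemannian manifold with Ricci tensor ρ and scalar curvature τ. If there is a constant c ≠ -2/(n+2) such that (∇_X ρ)(X,X) + c·(∇_X τ)·‖X‖² = 0 for all vector fields X, then (∇_X ρ)(X,X) = 0 for all X and τ is constant (i.e., ∇τ = 0). -/

import Mathlib

/-- Lemma 3.1 (i) ⇐ (ii): pointwise formulation on an `n`-dimensional inner product
space `V` (a tangent space of the Riemannian manifold).  `T X Y Z` stands for the
covariant derivative `(∇_X ρ)(Y,Z)` of the symmetric Ricci tensor `ρ`, and `dτ X` for
the derivative `∇_X τ` of the scalar curvature.  The hypotheses `hdiv` (the contracted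
second Bianchi identity `2 div ρ = ∇τ`) and `htr` (`τ = tr ρ`, differentiated) are the
standard facts relating these data.  If `(∇_X ρ)(X,X) + c (∇_X τ)‖X‖² ≡ 0` for some
constant `c ≠ -2/(n+2)`, then `(∇_X ρ)(X,X) ≡ 0` and `∇τ = 0`. -/
theorem cyclic_parallel_of_linear_combination
    {V : Type*} [NormedAddCommGroup V] [InnerProductSpace ℝ V] [FiniteDimensional ℝ V]
    {n : ℕ} (hn : 3 ≤ n) (hdim : Module.finrank ℝ V = n)
    (b : OrthonormalBasis (Fin n) ℝ V)
    (T : V →ₗ[ℝ] V →ₗ[ℝ] V →ₗ[ℝ] ℝ) (dτ : V →ₗ[ℝ] ℝ)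
    (hsymm : ∀ X Y Z : V, T X Y Z = T X Z Y)
    (hdiv : ∀ X : V, 2 * ∑ i, T (b i) (b i) X = dτ X)
    (htr : ∀ X : V, ∑ i, T X (b i) (b i) = dτ X)
    (c : ℝ) (hc : c ≠ -2 / ((n : ℝ) + 2))
    (h : ∀ X : V, T X X X + c * dτ X * ‖X‖ ^ 2 = 0) :
    (∀ X : V, T X X X = 0) ∧ dτ = 0 := by
  have polar : ∀ X Y Z : V,
      T X Y Z + T X Z Y + T Y X Z + T Y Z X + T Z X Y + T Z Y X
        + c * (dτ X * (2 * (inner ℝ Y Z : ℝ)) + dτ Y * (2 * (inner ℝ X Z : ℝ))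
            + dτ Z * (2 * (inner ℝ X Y : ℝ))) = 0 := by
    intro X Y Z
    have h1 := h (X + Y + Z)
    have h2 := h (X + Y)
    have h3 := h (Y + Z)
    have h4 := h (X + Z)
    have h5 := h X
    have h6 := h Y
    have h7 := h Z
    simp only [map_add, LinearMap.add_apply, norm_add_sq_real, inner_add_left,
      inner_add_right] at h1 h2 h3 h4
    linear_combination h1 - h2 - h3 - h4 + h5 + h6 + h7
  have key : ∀ X : V, (4 + c * (2 * (n : ℝ) + 4)) * dτ X = 0 := by
    intro X
    have hone : ∀ i : Fin n, (inner ℝ (b i) (b i) : ℝ) = 1 := by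
      intro i
      rw [real_inner_self_eq_norm_sq, b.orthonormal.1 i]
      norm_num
    have hE : ∑ i, dτ (b i) * (inner ℝ X (b i) : ℝ) = dτ X := by
      conv_rhs => rw [← b.sum_repr' X]
      rw [map_sum]
      refine Finset.sum_congr rfl fun i _ => ?_
      rw [map_smul, smul_eq_mul, real_inner_comm]
      ring
    have hB : ∑ i, T (b i) (b i) X = dτ X / 2 := by
      have := hdiv X; linarith
    have hC : ∑ i, T (b i) X (b i) = dτ X / 2 := by
      rw [← hB]
      exact Finset.sum_congr rfl fun i _ => hsymm (b i) X (b i)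
    have hA := htr X
    have hD : ∑ i : Fin n, (inner ℝ (b i) (b i) : ℝ) = (n : ℝ) := by
      simp [hone]
    have expand : ∑ i, (T X (b i) (b i) + T X (b i) (b i) + T (b i) X (b i)
        + T (b i) (b i) X + T (b i) X (b i) + T (b i) (b i) X
        + c * (dτ X * (2 * (inner ℝ (b i) (b i) : ℝ)) + dτ (b i) * (2 * (inner ℝ X (b i) : ℝ))
            + dτ (b i) * (2 * (inner ℝ X (b i) : ℝ))))
        = 2 * (∑ i, T X (b i) (b i)) + 2 * (∑ i, T (b i) X (b i))
          + 2 * (∑ i, T (b i) (b i) X)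
          + 2 * c * dτ X * (∑ i : Fin n, (inner ℝ (b i) (b i) : ℝ))
          + 4 * c * (∑ i, dτ (b i) * (inner ℝ X (b i) : ℝ)) := by
      rw [Finset.mul_sum, Finset.mul_sum, Finset.mul_sum, Finset.mul_sum, Finset.mul_sum,
        ← Finset.sum_add_distrib, ← Finset.sum_add_distrib, ← Finset.sum_add_distrib,
        ← Finset.sum_add_distrib]
      exact Finset.sum_congr rfl fun i _ => by ring
    have hzero' : ∑ i, (T X (b i) (b i) + T X (b i) (b i) + T (b i) X (b i)
        + T (b i) (b i) X + T (b i) X (b i) + T (b i) (b i) X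
        + c * (dτ X * (2 * (inner ℝ (b i) (b i) : ℝ)) + dτ (b i) * (2 * (inner ℝ X (b i) : ℝ))
            + dτ (b i) * (2 * (inner ℝ X (b i) : ℝ)))) = 0 :=
      Finset.sum_eq_zero fun i _ => polar X (b i) (b i)
    rw [expand, hA, hC, hB, hD, hE] at hzero'
    linarith
  have hcoef : (4 + c * (2 * (n : ℝ) + 4)) ≠ 0 := by
    intro h0
    apply hc
    have hn2 : (n : ℝ) + 2 ≠ 0 := by positivity
    field_simp
    linarith
  have hdτ : ∀ X : V, dτ X = 0 := by
    intro X
    have := key X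
    exact (mul_eq_zero.mp this).resolve_left hcoef
  refine ⟨fun X => ?_, LinearMap.ext hdτ⟩
  have := h X
  rw [hdτ X] at this
  linarith
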